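/- For the actSIS risk-tolerator model, an endemic equilibrium (p*, p*) with p* ∈ (0,1) is locally exponentially stable if φᵀ′(p*)·(1−p*)² < δ/β̄, i.e., both eigenvalues of the Jacobian at the equilibrium have negative real part under this condition. -/
import Mathlib

lemma quad_neg_re (T D : ℝ) (hT : T < 0) (hD : 0 < D) (z : ℂ)
    (h : z ^ 2 - (T : ℂ) * z + (D : ℂ) = 0) : z.re < 0 := by
  have hre := congrArg Complex.re h
  have him := congrArg Complex.im h
  simp [pow_two, Complex.mul_re, Complex.mul_im, Complex.add_re, Complex.add_im,
    Complex.sub_re, Complex.sub_im, Complex.ofReal_re, Complex.ofReal_im] at hre him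
  set a := z.re
  set b := z.im
  rcases mul_eq_zero.mp (by nlinarith [him] : b * (2 * a - T) = 0) with hb | hba
  · by_contra hle
    push_neg at hle
    nlinarith [hre, mul_nonneg (neg_nonneg.mpr hT.le) hle]
  · nlinarith

/-- actSIS risk-tolerators: an endemic equilibrium p* ∈ (0,1) is locally
exponentially stable if φᵀ′(p*)(1−p*)² < δ/β̄ : both eigenvalues of the
Jacobian have negative real part. -/
theorem actSIS_tolerator_EE_stable (β δ τ : ℝ) (hβ : 0 < β) (hδ : 0 < δ)
    (hτ : 0 < τ) (φT φT' : ℝ → ℝ) (hderiv : ∀ x, HasDerivAt φT (φT' x) x)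
    (p : ℝ) (hp : p ∈ Set.Ioo (0 : ℝ) 1)
    (hEE : φT p * (1 - p) = δ / β)
    (hcond : φT' p * (1 - p) ^ 2 < δ / β)
    (J : Matrix (Fin 2) (Fin 2) ℝ)
    (hJ : J = !![-(δ * p / (1 - p)), β * (1 - p) * p * φT' p;
                 1 / τ, -(1 / τ)]) :
    ∀ z : ℂ, z ^ 2 - (J.trace : ℂ) * z + (J.det : ℂ) = 0 → z.re < 0 := by
  obtain ⟨hp0, hp1⟩ := hp
  have h1p : (0:ℝ) < 1 - p := by linarith
  have hTr : J.trace = -(δ * p / (1 - p)) - 1 / τ := by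
    simp [hJ, Matrix.trace_fin_two_of, sub_eq_add_neg]
  have hDet : J.det = (δ * p / (1 - p)) * (1 / τ) - β * (1 - p) * p * φT' p * (1 / τ) := by
    simp [hJ, Matrix.det_fin_two_of]
  have hTneg : J.trace < 0 := by
    rw [hTr]
    have : 0 < δ * p / (1 - p) := by positivity
    have : 0 < 1 / τ := by positivity
    linarith
  have hDpos : 0 < J.det := by
    rw [hDet]
    have key : β * (1 - p) * p * φT' p < δ * p / (1 - p) := by
      have h2 : β * (φT' p * (1 - p) ^ 2) < δ := by
        calc β * (φT' p * (1 - p) ^ 2) < β * (δ / β) :=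
              mul_lt_mul_of_pos_left hcond hβ
          _ = δ := by field_simp
      rw [lt_div_iff₀ h1p]
      nlinarith
    have hτ' : 0 < 1 / τ := by positivity
    nlinarith
  intro z hz
  exact quad_neg_re _ _ hTneg hDpos z (by push_cast; exact hz)
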